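/- Let f₁,…,fₙ, p₁,…,p_m ∈ ℝ[x₁,…,xₙ]. In the differential polynomial ring ℝ{x₁,…,xₙ}, let A = {x_i^{(1)} − ι(f_i) : 1 ≤ i ≤ n} ∪ {ι(p_j) : 1 ≤ j ≤ m} and let [A] be the smallest δ-stable ideal containing A. Then the set of p ∈ ℝ[x₁,…,xₙ] with ι(p) ∈ [A] equals the ideal of ℝ[x₁,…,xₙ] generated by all higher Lie derivatives L^{(k)}(p_j) for k ≥ 0 and 1 ≤ j ≤ m. -/
import Mathlib


open MvPolynomial

/-- The differential polynomial ring ℝ{x₁,…,xₙ}: the polynomial ring over ℝ in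
the indeterminates x_i^{(k)}, indexed by pairs (i, k). -/
abbrev DiffPoly (n : ℕ) : Type := MvPolynomial (Fin n × ℕ) ℝ

/-- The derivation δ on ℝ{x₁,…,xₙ} with δ(x_i^{(k)}) = x_i^{(k+1)}. -/
noncomputable def delta (n : ℕ) : Derivation ℝ (DiffPoly n) (DiffPoly n) :=
  MvPolynomial.mkDerivation ℝ (fun v : Fin n × ℕ => X (v.1, v.2 + 1))

/-- The ring embedding ι : ℝ[x₁,…,xₙ] → ℝ{x₁,…,xₙ} sending x_i to x_i^{(0)}. -/
noncomputable def iota {n : ℕ} (p : MvPolynomial (Fin n) ℝ) : DiffPoly n :=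
  rename (fun i : Fin n => (i, 0)) p

/-- The differential ideal [A] generated by A ⊆ ℝ{x₁,…,xₙ}: the ideal generated by
all δ^k(a) for a ∈ A and k ∈ ℕ (equivalently, the smallest δ-stable ideal ⊇ A). -/
noncomputable def diffIdealGen (n : ℕ) (A : Set (DiffPoly n)) : Ideal (DiffPoly n) :=
  Ideal.span {q | ∃ a ∈ A, ∃ k : ℕ, q = (fun x => delta n x)^[k] a}

/-- The Lie derivative of a polynomial p with respect to the polynomial vector
field x' = f(x): L(p) = Σᵢ (∂p/∂xᵢ)·fᵢ. -/
noncomputable def lieDeriv {n : ℕ} (f : Fin n → MvPolynomial (Fin n) ℝ)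
    (p : MvPolynomial (Fin n) ℝ) : MvPolynomial (Fin n) ℝ :=
  ∑ i, pderiv i p * f i


section Aux

variable {n : ℕ} (f : Fin n → MvPolynomial (Fin n) ℝ)

noncomputable def Dv : Derivation ℝ (MvPolynomial (Fin n) ℝ) (MvPolynomial (Fin n) ℝ) :=
  mkDerivation ℝ f

lemma lieDeriv_eq (p : MvPolynomial (Fin n) ℝ) : lieDeriv f p = Dv f p := by
  induction p using MvPolynomial.induction_on with
  | C a => simp [lieDeriv, pderiv_C, Dv, C_eq_smul_one]
  | add p q hp hq =>
      simp only [lieDeriv, map_add, add_mul, Finset.sum_add_distrib] at *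
      rw [hp, hq]
  | mul_X p i hp =>
      simp only [lieDeriv, Derivation.leibniz, smul_eq_mul, add_mul, Finset.sum_add_distrib] at *
      have h1 : ∑ x, p * (pderiv x) (X i : MvPolynomial (Fin n) ℝ) * f x = p * (Dv f) (X i) := by
        simp [Dv, mkDerivation_X, Pi.single_apply, mul_ite, Finset.sum_ite_eq]
      have h2 : ∑ x, (X i : MvPolynomial (Fin n) ℝ) * (pderiv x) p * f x = X i * (Dv f) p := by
        rw [← hp, Finset.mul_sum]; congr 1; ext x; ring_nf
      rw [h1, h2]

noncomputable def piHom : DiffPoly n →ₐ[ℝ] MvPolynomial (Fin n) ℝ :=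
  aeval (fun v : Fin n × ℕ => (Dv f)^[v.2] (X v.1))

lemma piHom_iota (p : MvPolynomial (Fin n) ℝ) : piHom f (iota p) = p := by
  rw [iota, piHom, aeval_rename]
  have h : ((fun v : Fin n × ℕ => (Dv f)^[v.2] (X v.1)) ∘ fun i : Fin n => (i, 0)) = X := by
    funext i; simp
  rw [h, aeval_X_left_apply]

lemma piHom_delta (q : DiffPoly n) : piHom f (delta n q) = Dv f (piHom f q) := by
  induction q using MvPolynomial.induction_on with
  | C a =>
      rw [show ((C a : DiffPoly n)) = algebraMap ℝ _ a from rfl, Derivation.map_algebraMap,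
        map_zero, AlgHom.commutes, Derivation.map_algebraMap]
  | add p q hp hq => simp [hp, hq]
  | mul_X q v hq =>
      have h1 : piHom f (delta n (X v)) = Dv f (piHom f (X v)) := by
        simp [delta, piHom, mkDerivation_X, Function.iterate_succ_apply']
      simp only [Derivation.leibniz, smul_eq_mul, map_add, map_mul, hq, h1]

lemma piHom_delta_iter (k : ℕ) (q : DiffPoly n) :
    piHom f ((fun x => delta n x)^[k] q) = (Dv f)^[k] (piHom f q) := by
  induction k with
  | zero => rfl
  | succ k ih =>
      rw [Function.iterate_succ_apply', Function.iterate_succ_apply', piHom_delta, ih]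

lemma delta_iota (p : MvPolynomial (Fin n) ℝ) :
    delta n (iota p) = ∑ i, iota (pderiv i p) * X (i, 1) := by
  induction p using MvPolynomial.induction_on with
  | C a => simp [iota, MvPolynomial.derivation_C, pderiv_C]
  | add p q hp hq =>
      simp only [iota] at hp hq ⊢
      simp [map_add, hp, hq, add_mul, Finset.sum_add_distrib]
  | mul_X p i hp =>
      have hi : iota (p * X i) = iota p * X (i, 0) := by simp [iota]
      rw [hi, Derivation.leibniz, smul_eq_mul, smul_eq_mul, hp]
      have hd : delta n (X (i, 0) : DiffPoly n) = X (i, 1) := by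
        simp [delta, mkDerivation_X]
      rw [hd]
      have : ∀ j, iota (pderiv j (p * X i)) =
          iota (pderiv j p) * X (i, 0) + iota p * iota (pderiv j (X i)) := by
        intro j; rw [pderiv_mul]; simp [iota]
      simp only [this, add_mul, Finset.sum_add_distrib]
      have h1 : ∑ j, iota (pderiv j p) * X (i, 0) * X (j, 1) =
          X (i, 0) * ∑ j, iota (pderiv j p) * X (j, 1) := by
        rw [Finset.mul_sum]; congr 1; ext j; ring_nf
      have h2 : ∑ j, iota p * iota (pderiv j (X i : MvPolynomial (Fin n) ℝ)) * X (j, 1) =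
          iota p * X (i, 1) := by
        simp [iota, Pi.single_apply, apply_ite, mul_ite, Finset.sum_ite_eq]
      rw [h1, h2]; ring_nf

lemma diffIdealGen_stable (A : Set (DiffPoly n)) {q : DiffPoly n}
    (hq : q ∈ diffIdealGen n A) : delta n q ∈ diffIdealGen n A := by
  induction hq using Submodule.span_induction with
  | mem x hx =>
      obtain ⟨a, ha, k, rfl⟩ := hx
      exact Ideal.subset_span ⟨a, ha, k + 1, (Function.iterate_succ_apply' _ _ _).symm⟩
  | zero => simp
  | add x y hx hy ihx ihy => rw [map_add]; exact Ideal.add_mem _ ihx ihy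
  | smul r x hx ihx =>
      rw [smul_eq_mul, Derivation.leibniz, smul_eq_mul, smul_eq_mul]
      exact Ideal.add_mem _ (Ideal.mul_mem_left _ _ ihx)
        (Ideal.mul_mem_right _ _ hx)

lemma lieDeriv_iter_eq (k : ℕ) (p : MvPolynomial (Fin n) ℝ) :
    (lieDeriv f)^[k] p = (Dv f)^[k] p := by
  rw [show lieDeriv f = ⇑(Dv f) from funext (lieDeriv_eq f)]

lemma mem_step (S : Set (DiffPoly n)) (p : MvPolynomial (Fin n) ℝ) :
    delta n (iota p) - iota (Dv f p) ∈ diffIdealGen n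
      ({q | ∃ i : Fin n, q = (X (i, 1) : DiffPoly n) - iota (f i)} ∪ S) := by
  have h1 : iota (Dv f p) = ∑ i, iota (pderiv i p) * iota (f i) := by
    rw [← lieDeriv_eq]; simp only [lieDeriv, iota, map_sum, map_mul]
  rw [delta_iota, h1, ← Finset.sum_sub_distrib]
  refine Ideal.sum_mem _ fun i _ => ?_
  rw [← mul_sub]
  exact Ideal.mul_mem_left _ _ (Ideal.subset_span ⟨_, Or.inl ⟨i, rfl⟩, 0, rfl⟩)

lemma iter_mem (S : Set (DiffPoly n)) (p : MvPolynomial (Fin n) ℝ) (k : ℕ) :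
    (fun x => delta n x)^[k] (iota p) - iota ((Dv f)^[k] p) ∈ diffIdealGen n
      ({q | ∃ i : Fin n, q = (X (i, 1) : DiffPoly n) - iota (f i)} ∪ S) := by
  induction k with
  | zero => simp
  | succ k ih =>
      have h2 := diffIdealGen_stable _ ih
      have h3 := mem_step f S ((Dv f)^[k] p)
      have heq : (fun x => delta n x)^[k + 1] (iota p) - iota ((Dv f)^[k + 1] p)
          = delta n ((fun x => delta n x)^[k] (iota p) - iota ((Dv f)^[k] p))
            + (delta n (iota ((Dv f)^[k] p)) - iota (Dv f ((Dv f)^[k] p))) := by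
        rw [map_sub, Function.iterate_succ_apply', Function.iterate_succ_apply']
        ring_nf
      rw [heq]
      exact Ideal.add_mem _ h2 h3

end Aux

/-- With A = {x_i^{(1)} − ι(f_i)} ∪ {ι(p_j)} in ℝ{x₁,…,xₙ},
the nondifferential part of [A] is the ideal of ℝ[x₁,…,xₙ] generated by all
higher Lie derivatives L^{(k)}(p_j). -/
theorem stmt17 (n m : ℕ) (f : Fin n → MvPolynomial (Fin n) ℝ)
    (P : Fin m → MvPolynomial (Fin n) ℝ) :
    ∀ p : MvPolynomial (Fin n) ℝ,
      iota p ∈ diffIdealGen n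
          ({q | ∃ i : Fin n, q = (X (i, 1) : DiffPoly n) - iota (f i)} ∪
           {q | ∃ j : Fin m, q = iota (P j)}) ↔
        p ∈ Ideal.span {q | ∃ (j : Fin m) (k : ℕ), q = (lieDeriv f)^[k] (P j)} := by
  intro p
  constructor
  · intro hp
    have hle : diffIdealGen n
        ({q | ∃ i : Fin n, q = (X (i, 1) : DiffPoly n) - iota (f i)} ∪
         {q | ∃ j : Fin m, q = iota (P j)}) ≤
        Ideal.comap (piHom f).toRingHom
          (Ideal.span {q | ∃ (j : Fin m) (k : ℕ), q = (lieDeriv f)^[k] (P j)}) := by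
      rw [diffIdealGen, Ideal.span_le]
      rintro q ⟨a, ha, k, rfl⟩
      simp only [SetLike.mem_coe, Ideal.mem_comap, AlgHom.toRingHom_eq_coe,
        RingHom.coe_coe, piHom_delta_iter]
      rcases ha with ⟨i, rfl⟩ | ⟨j, rfl⟩
      · have h0 : piHom f ((X (i, 1) : DiffPoly n) - iota (f i)) = 0 := by
          rw [map_sub, piHom_iota, sub_eq_zero, piHom]
          simp [Dv]
        rw [h0, Function.iterate_fixed (map_zero _) k]
        exact Ideal.zero_mem _
      · rw [piHom_iota]
        exact Ideal.subset_span ⟨j, k, (lieDeriv_iter_eq f k (P j)).symm⟩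
    have := hle hp
    rwa [Ideal.mem_comap, AlgHom.toRingHom_eq_coe, RingHom.coe_coe, piHom_iota] at this
  · intro hp
    induction hp using Submodule.span_induction with
    | mem x hx =>
        obtain ⟨j, k, rfl⟩ := hx
        rw [show iota ((lieDeriv f)^[k] (P j)) = (fun x => delta n x)^[k] (iota (P j)) -
            ((fun x => delta n x)^[k] (iota (P j)) - iota ((Dv f)^[k] (P j))) by
          rw [lieDeriv_iter_eq]; ring]
        exact Ideal.sub_mem _
          (Ideal.subset_span ⟨iota (P j), Or.inr ⟨j, rfl⟩, k, rfl⟩)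
          (iter_mem f _ (P j) k)
    | zero => rw [show iota (0 : MvPolynomial (Fin n) ℝ) = 0 from map_zero _]; simp
    | add x y hx hy ihx ihy =>
        rw [show iota (x + y) = iota x + iota y from map_add _ _ _]
        exact Ideal.add_mem _ ihx ihy
    | smul r x hx ihx =>
        rw [smul_eq_mul, show iota (r * x) = iota r * iota x from map_mul _ _ _]
        exact Ideal.mul_mem_left _ _ ihx
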